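/- For every natural number d and every ordinal β < ω_d (the tower of ω's of height d), mc(β) is well defined and β < ω^{ω_{d-1}}; moreover for any limit γ with β < γ < ω_d, γ[mc(β)+1] > β. (This is the statement provable by Π⁰₁-induction on d.) -/

import Mathlib

open Ordinal

namespace FGH

/-- `predO α = some β` iff the ordinal notation `α` denotes the successor `β + 1`. -/
def predO : ONote → Option ONote
  | ONote.zero => none
  | ONote.oadd e n a =>
    match a with
    | ONote.oadd e₁ n₁ a₁ => (predO (ONote.oadd e₁ n₁ a₁)).map (ONote.oadd e n)
    | ONote.zero =>
      match e with
      | ONote.oadd _ _ _ => none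
      | ONote.zero =>
        match h : (n : ℕ) with
        | 1 => some ONote.zero
        | (k + 2) => some (ONote.oadd ONote.zero ⟨k + 1, by omega⟩ ONote.zero)
        | 0 => none  -- impossible since `n : ℕ+`

/-- The standard fundamental sequence on Cantor normal forms:
`(δ + ω^(β+1))[x] = δ + ω^β·x` and `(δ + ω^λ)[x] = δ + ω^(λ[x])` for `λ` a limit.
(Junk values on non-limit notations.) -/
def fundSeq : ONote → ℕ → ONote
  | ONote.zero, _ => ONote.zero
  | ONote.oadd e n a, x =>
    match a with
    | ONote.oadd e₁ n₁ a₁ => ONote.oadd e n (fundSeq (ONote.oadd e₁ n₁ a₁) x)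
    | ONote.zero =>
      let tail : ONote :=
        match predO e with
        | some e' => if h : 0 < x then ONote.oadd e' ⟨x, h⟩ ONote.zero else ONote.zero
        | none => ONote.oadd (fundSeq e x) 1 ONote.zero
      if h : 1 < (n : ℕ) then ONote.oadd e ⟨(n : ℕ) - 1, by omega⟩ tail
      else tail

/-- `γ` is a limit ordinal notation. -/
def IsLim (γ : ONote) : Prop := γ.repr ≠ 0 ∧ ∀ a < γ.repr, Order.succ a < γ.repr

/-- Maximal coefficient: `mc 0 = 0`, `mc (ω^α₀·a₀ + ⋯ + ω^αₙ·aₙ) = max_i {mc αᵢ, aᵢ}`. -/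
def mc : ONote → ℕ
  | ONote.zero => 0
  | ONote.oadd e n a => max (max (mc e) (n : ℕ)) (mc a)

/-- One computation step for the fast growing hierarchy relative to `f`. -/
def Kstep (f : ℕ → ℕ) (p : List ONote × ℕ) : List ONote × ℕ :=
  match p.1.getLast? with
  | none => p
  | some α =>
    let t := p.1.dropLast
    if α = ONote.zero then (t, f p.2)
    else
      match predO α with
      | some β => (t ++ List.replicate (p.2 + 1) β, 1)
      | none => (t ++ [fundSeq α p.2], p.2)

/-- The measure `h(α₀ ⋯ αₙ, x) = ω^α₀ + ⋯ + ω^αₙ`. -/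
noncomputable def hMeasure (p : List ONote × ℕ) : Ordinal :=
  (p.1.map (fun a => omega0 ^ a.repr)).sum

/-- `Fdef f α x y` : the derivation of `F^f_α(x)` terminates with value `y`. -/
def Fdef (f : ℕ → ℕ) (α : ONote) (x y : ℕ) : Prop :=
  ∃ n : ℕ, (Kstep f)^[n] ([α], x) = ([], y)

/-- Relational iterate: `FdefIter f α k a b` means `(F^f_α)^(k)(a) = b`. -/
def FdefIter (f : ℕ → ℕ) (α : ONote) : ℕ → ℕ → ℕ → Prop
  | 0, a, b => b = a
  | (k + 1), a, b => ∃ c, FdefIter f α k a c ∧ Fdef f α c b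

/-- The tower of `ω`s: `ω₀ = 0`, `ω_{n+1} = ω^{ω_n}`. -/
def omegaTower : ℕ → ONote
  | 0 => ONote.zero
  | (d + 1) => ONote.oadd (omegaTower d) 1 ONote.zero

end FGH

open FGH

section Helpers

open ONote

lemma isLim_iff (γ : ONote) : IsLim γ ↔ Order.IsSuccLimit γ.repr := by
  rw [Ordinal.isSuccLimit_iff, Order.isSuccPrelimit_iff_succ_lt]; rfl

lemma oadd_repr_pos' (e : ONote) (n : ℕ+) (a : ONote) : 0 < (ONote.oadd e n a).repr :=
  lt_of_lt_of_le (opow_pos _ omega0_pos) (ONote.omega0_le_oadd e n a)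

lemma exp_repr_lt {e : ONote} {n : ℕ+} {a : ONote} {b : Ordinal}
    (hb : (ONote.oadd e n a).repr < omega0 ^ b) : e.repr < b :=
  (opow_lt_opow_iff_right one_lt_omega0).1
    (lt_of_le_of_lt (ONote.omega0_le_oadd e n a) hb)

lemma repr_lt_coeff_succ {e : ONote} {n : ℕ+} {a : ONote} (h : (ONote.oadd e n a).NF) :
    (ONote.oadd e n a).repr < omega0 ^ e.repr * ((n : ℕ) + 1) := by
  have ha : a.repr < omega0 ^ e.repr := h.snd'.repr_lt
  simp only [ONote.repr, Nat.cast_add, Nat.cast_one, mul_add, mul_one]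
  exact add_lt_add_right ha _

lemma repr_lt_omega0_opow {e : ONote} {n : ℕ+} {a : ONote} {b : Ordinal}
    (hβ : (ONote.oadd e n a).NF) (h : e.repr < b) :
    (ONote.oadd e n a).repr < omega0 ^ b :=
  (ONote.NF.below_of_lt h hβ).repr_lt

lemma isLimit_omega0_opow' {x : Ordinal} (hx : x ≠ 0) : Order.IsSuccLimit (omega0 ^ x) := by
  rcases Ordinal.zero_or_succ_or_isSuccLimit x with h0 | ⟨y, rfl⟩ | h
  · exact absurd h0 hx
  · rw [opow_succ]
    exact isSuccLimit_mul_right (opow_pos _ omega0_pos) isSuccLimit_omega0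
  · exact isSuccLimit_opow one_lt_omega0 h

lemma oadd_lt_cases {e₁ : ONote} {n₁ : ℕ+} {a₁ e : ONote} {n : ℕ+} {a : ONote}
    (h₁ : (ONote.oadd e₁ n₁ a₁).NF) (h₂ : (ONote.oadd e n a).NF)
    (h : (ONote.oadd e₁ n₁ a₁).repr < (ONote.oadd e n a).repr) :
    e₁.repr < e.repr ∨ (e₁ = e ∧ ((n₁ : ℕ) < (n : ℕ) ∨ (n₁ = n ∧ a₁.repr < a.repr))) := by
  have hce := @ONote.cmp_compares e₁ e h₁.fst h₂.fst
  rcases he : ONote.cmp e₁ e with _ | _ | _ <;> rw [he] at hce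
  · exact Or.inl (ONote.lt_def.1 hce)
  · obtain rfl := hce
    rcases lt_trichotomy (n₁ : ℕ) (n : ℕ) with hn | hn | hn
    · exact Or.inr ⟨rfl, Or.inl hn⟩
    · obtain rfl : n₁ = n := Subtype.ext hn
      refine Or.inr ⟨rfl, Or.inr ⟨rfl, ?_⟩⟩
      simpa only [ONote.repr, add_lt_add_iff_left] using h
    · exact absurd (ONote.lt_def.1 (ONote.oadd_lt_oadd_2 h₂ hn)) (asymm h)
  · exact absurd (ONote.lt_def.1 (ONote.oadd_lt_oadd_1 h₂ hce)) (asymm h)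

end Helpers
section PredO
open ONote

lemma predO_spec : ∀ (α : ONote), α.NF →
    (∀ b, predO α = some b → b.NF ∧ b.repr + 1 = α.repr)
    ∧ (predO α = none → α = ONote.zero ∨ Order.IsSuccLimit α.repr) := by
  intro α
  induction α with
  | zero => exact fun _ => ⟨fun b hb => by simp [predO] at hb, fun _ => Or.inl rfl⟩
  | oadd e n a ihe iha =>
    intro hNF
    cases a with
    | oadd e₁ n₁ a₁ =>
      constructor
      · intro b hb
        simp only [predO, Option.map_eq_some_iff] at hb
        obtain ⟨b', hb', rfl⟩ := hb
        obtain ⟨hb'NF, hb'r⟩ := (iha hNF.snd).1 b' hb'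
        have hlt : b'.repr < omega0 ^ e.repr :=
          lt_of_lt_of_le (lt_of_lt_of_le (lt_add_one _) hb'r.le) hNF.snd'.repr_lt.le
        refine ⟨ONote.NF.oadd hNF.fst n (ONote.NF.below_of_lt' hlt hb'NF), ?_⟩
        simp only [ONote.repr, add_assoc, hb'r]
      · intro hb
        simp only [predO, Option.map_eq_none_iff] at hb
        rcases (iha hNF.snd).2 hb with h0 | h
        · cases h0
        · exact Or.inr (isSuccLimit_add _ h)
    | zero =>
      cases e with
      | oadd e₂ n₂ a₂ =>
        refine ⟨fun b hb => by simp [predO] at hb, fun _ => Or.inr ?_⟩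
        simp only [ONote.repr, add_zero]
        refine isSuccLimit_mul_left (isLimit_omega0_opow' (oadd_repr_pos' e₂ n₂ a₂).ne') ?_
        exact_mod_cast n.pos
      | zero =>
        constructor
        · intro b hb
          simp only [predO] at hb
          split at hb
          · cases hb
            refine ⟨ONote.NF.zero, ?_⟩
            simp_all [ONote.repr]
          · cases hb
            rename_i k hk
            refine ⟨ONote.NF.oadd ONote.NF.zero _ ONote.NFBelow.zero, ?_⟩
            simp only [ONote.repr, hk, opow_zero, one_mul, PNat.mk_ofNat, Nat.cast_add,
              Nat.cast_one, add_zero, Nat.cast_succ]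
            rw [PNat.mk_coe]
            push_cast
            ring_nf
          · cases hb
        · intro hb
          simp only [predO] at hb
          split at hb
          · cases hb
          · cases hb
          · rename_i hk
            exact absurd hk n.pos.ne'
end PredO


section Main
open ONote

lemma not_isLim_nat (n : ℕ+) : ¬ IsLim (ONote.oadd ONote.zero n ONote.zero) := by
  intro h
  unfold IsLim at h
  have h2 := omega0_le_of_isSuccLimit ((isLim_iff _).1 h)
  have h3 : (ONote.oadd ONote.zero n ONote.zero).repr < omega0 := by
    simp only [ONote.repr, opow_zero, one_mul, add_zero]
    exact nat_lt_omega0 n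
  exact absurd (h2.trans_lt h3) (lt_irrefl _)

lemma fundSeq_gt : ∀ (γ : ONote), γ.NF → IsLim γ → ∀ β : ONote, β.NF → ∀ m : ℕ, mc β ≤ m →
    β.repr < γ.repr → β.repr < (fundSeq γ (m + 1)).repr := by
  intro γ
  induction γ with
  | zero =>
    intro _ hlim
    exact absurd rfl hlim.1
  | oadd e n a ihe iha =>
    intro hNF hlim β hβ m hm hlt
    cases a with
    | oadd e₂ n₂ a₂ =>
      set a := ONote.oadd e₂ n₂ a₂ with ha
      have hfs : fundSeq (ONote.oadd e n a) (m + 1) = ONote.oadd e n (fundSeq a (m + 1)) := by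
        rw [ha]; rfl
      have hla : IsLim a := by
        rcases Ordinal.zero_or_succ_or_isSuccLimit a.repr with h0 | ⟨y, hy⟩ | h
        · exact absurd h0 (oadd_repr_pos' e₂ n₂ a₂).ne'
        · exfalso
          have hγ : (ONote.oadd e n a).repr = Order.succ (omega0 ^ e.repr * n + y) := by
            show omega0 ^ e.repr * n + a.repr = _
            rw [← hy, Ordinal.add_succ]
          have := hlim.2 _ (show omega0 ^ e.repr * n + y < (ONote.oadd e n a).repr by
            rw [hγ]; exact Order.lt_succ _)
          rw [hγ] at this
          exact absurd this (lt_irrefl _)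
        · exact (isLim_iff _).2 h
      rw [hfs]
      cases β with
      | zero => exact oadd_repr_pos' _ _ _
      | oadd e₁ n₁ a₁ =>
        rcases oadd_lt_cases hβ hNF hlt with hc | ⟨rfl, hc⟩
        · calc (ONote.oadd e₁ n₁ a₁).repr < omega0 ^ e.repr := repr_lt_omega0_opow hβ hc
          _ ≤ omega0 ^ e.repr * n := le_mul_of_one_le_right (zero_le)
              (Nat.one_le_cast.2 n.pos)
          _ ≤ _ := le_self_add
        · rcases hc with hn | ⟨rfl, hc⟩
          · calc (ONote.oadd e₁ n₁ a₁).repr < omega0 ^ e₁.repr * ((n₁ : ℕ) + 1) :=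
                repr_lt_coeff_succ hβ
            _ ≤ omega0 ^ e₁.repr * n := by
                apply mul_le_mul_right
                exact_mod_cast Nat.succ_le_of_lt hn
            _ ≤ _ := le_self_add
          · have h1 : a₁.repr < (fundSeq a (m + 1)).repr :=
              iha hNF.snd hla a₁ hβ.snd m (le_trans (le_max_right _ _) hm) hc
            simp only [ONote.repr]
            exact add_lt_add_right h1 _
    | zero =>
      -- γ = ω ^ e * n, with e ≠ 0 since γ is a limit
      have he0 : e ≠ ONote.zero := by
        rintro rfl
        exact not_isLim_nat n hlim
      -- the "tail" analysis
      have key : ∀ t : ONote,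
          ((predO e = none ∧ t = ONote.oadd (fundSeq e (m + 1)) 1 ONote.zero) ∨
           (∃ e' , predO e = some e' ∧ t = ONote.oadd e' ⟨m + 1, Nat.succ_pos m⟩ ONote.zero)) →
          ∀ β' : ONote, β'.NF → mc β' ≤ m → β'.repr < omega0 ^ e.repr → β'.repr < t.repr := by
        rintro t (⟨hp, rfl⟩ | ⟨e', hp, rfl⟩) β' hβ' hm' hβ'lt
        · -- e is a limit
          have hel : IsLim e := by
            rcases (predO_spec e hNF.fst).2 hp with h0 | h
            · exact absurd h0 he0
            · exact (isLim_iff _).2 h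
          cases β' with
          | zero => exact oadd_repr_pos' _ _ _
          | oadd e₁ n₁ a₁ =>
            have he₁ : e₁.repr < e.repr := exp_repr_lt hβ'lt
            have hmc : mc e₁ ≤ m :=
              le_trans (le_trans (le_max_left _ _) (le_max_left _ _)) hm'
            have h2 : e₁.repr < (fundSeq e (m + 1)).repr := ihe hNF.fst hel e₁ hβ'.fst m hmc he₁
            calc (ONote.oadd e₁ n₁ a₁).repr < omega0 ^ (fundSeq e (m + 1)).repr :=
                repr_lt_omega0_opow hβ' h2
            _ ≤ _ := by
                simp only [ONote.repr, PNat.one_coe, Nat.cast_one, mul_one, add_zero, le_refl]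
        · -- e = e' + 1
          obtain ⟨he'NF, he'⟩ := (predO_spec e hNF.fst).1 e' hp
          cases β' with
          | zero => exact oadd_repr_pos' _ _ _
          | oadd e₁ n₁ a₁ =>
            have he₁ : e₁.repr < e.repr := exp_repr_lt hβ'lt
            have he₁' : e₁.repr ≤ e'.repr := by
              rw [← he'] at he₁
              exact Order.lt_add_one_iff.1 he₁
            have hn₁ : (n₁ : ℕ) ≤ m :=
              le_trans (le_trans (le_max_right _ _) (le_max_left _ _)) hm'
            calc (ONote.oadd e₁ n₁ a₁).repr < omega0 ^ e₁.repr * ((n₁ : ℕ) + 1) :=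
                repr_lt_coeff_succ hβ'
            _ ≤ omega0 ^ e'.repr * ((m : ℕ) + 1) := by
                apply mul_le_mul' (opow_le_opow_right omega0_pos he₁')
                exact_mod_cast Nat.succ_le_succ hn₁
            _ ≤ _ := by
                simp only [ONote.repr, PNat.mk_coe, add_zero]
                push_cast
                exact le_refl _
      have finish : ∀ t : ONote,
          (∀ β' : ONote, β'.NF → mc β' ≤ m → β'.repr < omega0 ^ e.repr → β'.repr < t.repr) →
          (fundSeq (ONote.oadd e n ONote.zero) (m + 1) =
            if h : 1 < (n : ℕ) then ONote.oadd e ⟨(n : ℕ) - 1, by omega⟩ t else t) →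
          β.repr < (fundSeq (ONote.oadd e n ONote.zero) (m + 1)).repr := by
        intro t hkey hfs
        rw [hfs]
        by_cases hn : 1 < (n : ℕ)
        · rw [dif_pos hn]
          cases β with
          | zero => exact oadd_repr_pos' _ _ _
          | oadd e₁ n₁ a₁ =>
            have hone : (1 : Ordinal) ≤ ((n : ℕ) - 1 : ℕ) := Nat.one_le_cast.2 (by omega)
            rcases oadd_lt_cases hβ hNF hlt with hc | ⟨rfl, hc⟩
            · calc (ONote.oadd e₁ n₁ a₁).repr < omega0 ^ e.repr := repr_lt_omega0_opow hβ hc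
              _ ≤ omega0 ^ e.repr * (((n : ℕ) - 1 : ℕ) : Ordinal) :=
                  le_mul_of_one_le_right (zero_le) hone
              _ ≤ (ONote.oadd e ⟨(n : ℕ) - 1, by omega⟩ t).repr := by
                  simp only [ONote.repr, PNat.mk_coe]
                  exact le_self_add
            · have ha₁ : a₁.repr < t.repr :=
                hkey a₁ hβ.snd (le_trans (le_max_right _ _) hm) hβ.snd'.repr_lt
              have hn₁ : (n₁ : ℕ) ≤ (n : ℕ) - 1 := by
                rcases hc with hn₁ | ⟨rfl, hc⟩
                · omega
                · exact absurd hc (by simp [ONote.repr])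
              calc (ONote.oadd e₁ n₁ a₁).repr = omega0 ^ e₁.repr * (n₁ : ℕ) + a₁.repr := rfl
              _ ≤ omega0 ^ e₁.repr * (((n : ℕ) - 1 : ℕ) : Ordinal) + a₁.repr :=
                  add_le_add_left (mul_le_mul_right (Nat.cast_le.2 hn₁) _) _
              _ < omega0 ^ e₁.repr * (((n : ℕ) - 1 : ℕ) : Ordinal) + t.repr :=
                  add_lt_add_right ha₁ _
              _ = (ONote.oadd e₁ ⟨(n : ℕ) - 1, by omega⟩ t).repr := by
                  simp only [ONote.repr, PNat.mk_coe]
        · rw [dif_neg hn]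
          apply hkey β hβ hm
          have hn1 : (n : ℕ) = 1 := by have := n.pos; omega
          have : (ONote.oadd e n ONote.zero).repr = omega0 ^ e.repr := by
            simp [ONote.repr, hn1]
          rwa [this] at hlt
      rcases hp : predO e with _ | e'
      · refine finish (ONote.oadd (fundSeq e (m + 1)) 1 ONote.zero)
          (key _ (Or.inl ⟨hp, rfl⟩)) ?_
        simp only [fundSeq, hp]
      · refine finish (ONote.oadd e' ⟨m + 1, Nat.succ_pos m⟩ ONote.zero)
          (key _ (Or.inr ⟨e', hp, rfl⟩)) ?_
        simp only [fundSeq, hp]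
        rw [dif_pos (Nat.succ_pos m)]

theorem stmt12 (d : ℕ) (β : ONote) (hβ : β.NF) (hlt : β.repr < (omegaTower d).repr) :
    (∀ e, d = e + 1 → β.repr < (ONote.oadd (omegaTower e) 1 ONote.zero).repr)
    ∧ ∀ γ : ONote, γ.NF → IsLim γ → β.repr < γ.repr → γ.repr < (omegaTower d).repr →
        β.repr < (fundSeq γ (mc β + 1)).repr := by
  constructor
  · intro e he
    subst he
    exact hlt
  · intro γ hγ hlim hβγ _
    exact fundSeq_gt γ hγ hlim β hβ (mc β) le_rfl hβγ
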